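/- Let q be an odd prime power, let m divide q − 1, set r = (q−1)/m, define (r̄, m̄) = (r, m) if r is even and (2r, m/2) if r is odd, and let γ be a generator of the cyclic group 𝔽_q^*. For i ∈ {0, …, m̄ − 1} set Δᵢ = { {α, β} : α, β ∈ 𝔽_q, α − β ∈ S_{q,m̄}·γ^i }. Then the orbits of G_{q,m} acting on the set of 2-element subsets of 𝔽_q are precisely Δ₀, …, Δ_{m̄−1}. -/

import Mathlib

/-- The set `S_{q,m}` of `m`-th powers of nonzero elements of a field. -/
def mthPowers (F : Type*) [Field F] (m : ℕ) : Set F :=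
  {x : F | ∃ a : F, a ≠ 0 ∧ a ^ m = x}

/-- The group `G_{q,m} ≤ Sym(F)`, generated by all translations `x ↦ x + α` and the
multiplications `x ↦ x * α` for `α ∈ S_{q,m}`. -/
def Gqm (F : Type*) [Field F] (m : ℕ) : Subgroup (Equiv.Perm F) :=
  Subgroup.closure
    ((Set.range fun a : F => Equiv.addRight a) ∪
      {e : Equiv.Perm F | ∃ (a : F) (ha : a ≠ 0), a ∈ mthPowers F m ∧ e = Equiv.mulRight₀ a ha})

section Aux

variable {F : Type*} [Field F]

lemma mem_Gqm_affine {m : ℕ} {c : F} (hc : c ≠ 0) (v : F) :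
    (Equiv.addRight v) * (Equiv.mulRight₀ (c ^ m) (pow_ne_zero m hc)) ∈ Gqm F m :=
  Subgroup.mul_mem _
    (Subgroup.subset_closure (Or.inl ⟨v, rfl⟩))
    (Subgroup.subset_closure (Or.inr ⟨c ^ m, pow_ne_zero m hc, ⟨c, hc, rfl⟩, rfl⟩))

lemma affine_of_mem_Gqm {m : ℕ} {g : Equiv.Perm F} (hg : g ∈ Gqm F m) :
    ∃ u v : F, (∃ c : F, c ≠ 0 ∧ c ^ m = u) ∧ ∀ x, g x = x * u + v := by
  induction hg using Subgroup.closure_induction with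
  | mem x hx =>
    rcases hx with ⟨a, rfl⟩ | ⟨a, ha, ⟨c, hc, hcm⟩, rfl⟩
    · exact ⟨1, a, ⟨1, one_ne_zero, one_pow m⟩, fun x => by simp⟩
    · exact ⟨a, 0, ⟨c, hc, hcm⟩, fun x => by simp [Equiv.mulRight₀]⟩
  | one => exact ⟨1, 0, ⟨1, one_ne_zero, one_pow m⟩, fun x => by simp⟩
  | mul x y hx hy ihx ihy =>
    obtain ⟨u1, v1, ⟨c1, hc1, hc1m⟩, h1⟩ := ihx
    obtain ⟨u2, v2, ⟨c2, hc2, hc2m⟩, h2⟩ := ihy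
    refine ⟨u2 * u1, v2 * u1 + v1, ⟨c2 * c1, mul_ne_zero hc2 hc1,
      by rw [mul_pow, hc1m, hc2m]⟩, fun z => ?_⟩
    have : (x * y) z = x (y z) := rfl
    rw [this, h2, h1]
    ring
  | inv x hx ihx =>
    obtain ⟨u, v, ⟨c, hc, hcm⟩, h⟩ := ihx
    have hu : u ≠ 0 := hcm ▸ pow_ne_zero m hc
    refine ⟨u⁻¹, -v * u⁻¹, ⟨c⁻¹, inv_ne_zero hc, by rw [inv_pow, hcm]⟩, fun y => ?_⟩
    apply x.injective
    have hxy : x (x⁻¹ y) = y := Equiv.apply_symm_apply x y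
    rw [hxy, h]
    field_simp
    ring

lemma gamma_half {q : ℕ} [Fintype F] (hF : Fintype.card F = q) (hq3 : 3 ≤ q)
    (h2q : 2 ∣ q - 1)
    (γ : Fˣ) (hγ : ∀ x : Fˣ, x ∈ Subgroup.zpowers γ) :
    γ ^ ((q - 1) / 2) = -1 := by
  have hcard : Nat.card Fˣ = q - 1 := by
    rw [Nat.card_units, Nat.card_eq_fintype_card, hF]
  have horder : orderOf γ = q - 1 := (orderOf_eq_card_of_forall_mem_zpowers hγ).trans hcard
  have h2 : (q - 1) / 2 * 2 = q - 1 := Nat.div_mul_cancel h2q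
  have hpos : 0 < (q - 1) / 2 := by omega
  have hlt : (q - 1) / 2 < q - 1 := by omega
  have hsq : (γ ^ ((q - 1) / 2)) ^ 2 = 1 := by
    rw [← pow_mul, h2, ← horder, pow_orderOf_eq_one]
  have hne : γ ^ ((q - 1) / 2) ≠ 1 := by
    intro h
    have hdvd := orderOf_dvd_of_pow_eq_one h
    rw [horder] at hdvd
    exact absurd (Nat.le_of_dvd hpos hdvd) (by omega)
  set a : F := ((γ ^ ((q - 1) / 2) : Fˣ) : F) with ha
  have ha2 : a ^ 2 = 1 := by
    rw [ha, ← Units.val_pow_eq_pow_val, hsq, Units.val_one]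
  have hane : a ≠ 1 := fun h => hne (Units.ext (h.trans Units.val_one.symm))
  have hfac : (a - 1) * (a + 1) = 0 := by linear_combination ha2
  rcases mul_eq_zero.mp hfac with h | h
  · exact absurd (sub_eq_zero.mp h) hane
  · have haneg : a = -1 := eq_neg_of_add_eq_zero_left h
    exact Units.ext (by rw [Units.val_neg, Units.val_one, ← ha]; exact haneg)

lemma pm_lemma {q m mbar : ℕ} [Fintype F] (hF : Fintype.card F = q) (hq3 : 3 ≤ q)
    (hm : m ∣ q - 1) (hm0 : m ≠ 0) (h2q : 2 ∣ q - 1)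
    (hmbar : mbar = if 2 ∣ (q - 1) / m then m else m / 2)
    (γ : Fˣ) (hγ : ∀ x : Fˣ, x ∈ Subgroup.zpowers γ) :
    ∀ c : F, c ≠ 0 → ∃ d : F, d ≠ 0 ∧ (c ^ mbar = d ^ m ∨ c ^ mbar = -d ^ m) := by
  intro c hc
  by_cases hr : 2 ∣ (q - 1) / m
  · rw [hmbar, if_pos hr]
    exact ⟨c, hc, Or.inl rfl⟩
  · rw [hmbar, if_neg hr]
    set r := (q - 1) / m with hrdef
    have hrm : m * r = q - 1 := Nat.mul_div_cancel' hm
    have h2m : 2 ∣ m := ((Nat.prime_two.dvd_mul).mp (by rw [hrm]; exact h2q)).resolve_right hr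
    set M := m / 2 with hMdef
    have hM : 2 * M = m := Nat.mul_div_cancel' h2m
    have hmZ : (m : ℤ) = 2 * (M : ℤ) := by exact_mod_cast hM.symm
    obtain ⟨k, hk⟩ := hγ (Units.mk0 c hc)
    have hk' : γ ^ k = Units.mk0 c hc := hk
    have hck : c = ((γ ^ k : Fˣ) : F) := by rw [hk']; rfl
    rcases Int.even_or_odd k with ⟨j, hj⟩ | hkodd
    · refine ⟨((γ ^ j : Fˣ) : F), Units.ne_zero _, Or.inl ?_⟩
      rw [hck, ← Units.val_pow_eq_pow_val, ← Units.val_pow_eq_pow_val]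
      congr 1
      rw [← zpow_natCast (γ ^ k) M, ← zpow_natCast (γ ^ j) m, ← zpow_mul, ← zpow_mul]
      congr 1
      rw [hj, hmZ]; ring
    · have hrodd : Odd r := Nat.odd_iff.mpr (Nat.two_dvd_ne_zero.mp hr ▸ rfl)
      have hroddZ : Odd (r : ℤ) := by exact_mod_cast hrodd
      obtain ⟨j, hj⟩ := hkodd.sub_odd hroddZ
      have hjk : k = (r : ℤ) + 2 * j := by omega
      have hnat1 : (q - 1) / 2 = r * M := by
        refine Nat.div_eq_of_eq_mul_left (by norm_num) ?_
        rw [← hrm, ← hM]; ring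
      have hhalf : γ ^ (((q - 1) / 2 : ℕ) : ℤ) = -1 := by
        rw [zpow_natCast]; exact gamma_half hF hq3 h2q γ hγ
      refine ⟨((γ ^ j : Fˣ) : F), Units.ne_zero _, Or.inr ?_⟩
      have hu : (γ ^ k) ^ (M : ℤ) = -((γ ^ j) ^ (m : ℤ)) := by
        rw [← zpow_mul, ← zpow_mul]
        have key : k * (M : ℤ) = (((q - 1) / 2 : ℕ) : ℤ) + j * (m : ℤ) := by
          have h2 : ((((q - 1) / 2 : ℕ)) : ℤ) = (r : ℤ) * (M : ℤ) := by
            exact_mod_cast hnat1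
          rw [hjk, hmZ, h2]; ring
        rw [key, zpow_add, hhalf]
        exact neg_one_mul _
      have hu' : (γ ^ k) ^ M = -((γ ^ j) ^ m) := by
        rw [← zpow_natCast (γ ^ k) M, ← zpow_natCast (γ ^ j) m, hu]
      rw [hck, ← Units.val_pow_eq_pow_val, ← Units.val_pow_eq_pow_val, hu', Units.val_neg]

lemma orbit_eq_delta {m mbar : ℕ} (hdvd : m / mbar * mbar = m)
    (hpm : ∀ c : F, c ≠ 0 → ∃ d : F, d ≠ 0 ∧ (c ^ mbar = d ^ m ∨ c ^ mbar = -d ^ m))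
    (e : F) (α β : F) (h : ∃ c : F, c ≠ 0 ∧ α - β = c ^ mbar * e) :
    {t : Set F | ∃ g ∈ Gqm F m, (⇑(g : Equiv.Perm F)) '' {α, β} = t} =
      {s : Set F | ∃ α' β' : F, s = {α', β'} ∧ ∃ c : F, c ≠ 0 ∧ α' - β' = c ^ mbar * e} := by
  obtain ⟨c0, hc0, hd⟩ := h
  ext t
  simp only [Set.mem_setOf_eq]
  constructor
  · rintro ⟨g, hg, rfl⟩
    obtain ⟨u, v, ⟨c, hc, rfl⟩, hgx⟩ := affine_of_mem_Gqm hg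
    refine ⟨α * c ^ m + v, β * c ^ m + v, ?_, c0 * c ^ (m / mbar),
      mul_ne_zero hc0 (pow_ne_zero _ hc), ?_⟩
    · rw [Set.image_pair, hgx, hgx]
    · have hcm : (c0 * c ^ (m / mbar)) ^ mbar = c0 ^ mbar * c ^ m := by
        rw [mul_pow, ← pow_mul, hdvd]
      rw [hcm]
      linear_combination (c ^ m) * hd
  · rintro ⟨α', β', rfl, c, hc, hd'⟩
    have key : ∀ a b d : F, d ≠ 0 → a - b = d ^ m * (α - β) →
        ∃ g ∈ Gqm F m, (⇑(g : Equiv.Perm F)) '' {α, β} = {a, b} := by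
      intro a b d hdne hab
      refine ⟨_, mem_Gqm_affine (m := m) hdne (a - α * d ^ m), ?_⟩
      rw [Set.image_pair]
      have hα : (Equiv.addRight (a - α * d ^ m) *
          Equiv.mulRight₀ (d ^ m) (pow_ne_zero m hdne)) α = a := by
        show α * d ^ m + (a - α * d ^ m) = a
        ring
      have hβ : (Equiv.addRight (a - α * d ^ m) *
          Equiv.mulRight₀ (d ^ m) (pow_ne_zero m hdne)) β = b := by
        show β * d ^ m + (a - α * d ^ m) = b
        linear_combination hab
      rw [hα, hβ]
    have hw : α' - β' = (c * c0⁻¹) ^ mbar * (α - β) := by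
      rw [hd', hd, mul_pow, inv_pow]
      field_simp
    obtain ⟨d, hdne, hcase | hcase⟩ := hpm (c * c0⁻¹) (mul_ne_zero hc (inv_ne_zero hc0))
    · exact key α' β' d hdne (by rw [hw, hcase])
    · rw [Set.pair_comm α' β']
      refine key β' α' d hdne ?_
      rw [← neg_sub α' β', hw, hcase]
      ring

end Aux

/-- The orbits of `G_{q,m}` on the 2-element subsets of `F_q` are precisely the sets
`Δ_i = {{α, β} : α - β ∈ S_{q,m̄} γ^i}` for `i ∈ {0, …, m̄ - 1}`. -/
theorem stmt5 (q m : ℕ) (hodd : Odd q) (F : Type*) [Field F] [Fintype F]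
    (hF : Fintype.card F = q) (hm : m ∣ q - 1)
    (γ : Fˣ) (hγ : ∀ x : Fˣ, x ∈ Subgroup.zpowers γ)
    (mbar : ℕ) (hmbar : mbar = if 2 ∣ (q - 1) / m then m else m / 2)
    (Δ : ℕ → Set (Set F))
    (hΔ : ∀ i, Δ i = {s : Set F | ∃ α β : F,
      s = {α, β} ∧ ∃ c : F, c ≠ 0 ∧ α - β = c ^ mbar * (γ : F) ^ i}) :
    {O : Set (Set F) | ∃ s : Set F, s.ncard = 2 ∧
        O = {t : Set F | ∃ g ∈ Gqm F m, (⇑(g : Equiv.Perm F)) '' s = t}} =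
      {P : Set (Set F) | ∃ i < mbar, P = Δ i} := by
  have hq2 : 2 ≤ q := hF ▸ Fintype.one_lt_card
  have hq3 : 3 ≤ q := by
    rcases hodd with ⟨t, ht⟩; omega
  have hm0 : m ≠ 0 := by
    rintro rfl
    rw [zero_dvd_iff] at hm
    omega
  have hrm : m * ((q - 1) / m) = q - 1 := Nat.mul_div_cancel' hm
  have h2q : 2 ∣ q - 1 := (Nat.Odd.sub_odd hodd odd_one).two_dvd
  have h2m_of : ¬ 2 ∣ (q - 1) / m → 2 ∣ m := fun hr =>
    ((Nat.prime_two.dvd_mul).mp (by rw [hrm]; exact h2q)).resolve_right hr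
  have hmbar_pos : 0 < mbar := by
    rw [hmbar]; split_ifs with h
    · omega
    · have := h2m_of h
      omega
  have hdvd : m / mbar * mbar = m := by
    rw [hmbar]; split_ifs with h
    · rw [Nat.div_self (by omega), one_mul]
    · exact Nat.div_mul_cancel (Nat.div_dvd_of_dvd (h2m_of h))
  have hpm := pm_lemma (F := F) hF hq3 hm hm0 h2q hmbar γ hγ
  have horbit : ∀ (α β : F) (i : ℕ), (∃ c : F, c ≠ 0 ∧ α - β = c ^ mbar * (γ : F) ^ i) →
      {t : Set F | ∃ g ∈ Gqm F m, (⇑(g : Equiv.Perm F)) '' {α, β} = t} = Δ i := by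
    intro α β i h
    rw [hΔ]
    exact orbit_eq_delta hdvd hpm ((γ : F) ^ i) α β h
  ext O
  simp only [Set.mem_setOf_eq]
  constructor
  · rintro ⟨s, hs2, rfl⟩
    obtain ⟨α, β, hne, rfl⟩ := Set.ncard_eq_two.mp hs2
    have hd0 : α - β ≠ 0 := sub_ne_zero.mpr hne
    obtain ⟨k, hk⟩ : ∃ k : ℕ, γ ^ k = Units.mk0 _ hd0 :=
      mem_powers_iff_mem_zpowers.mpr (hγ _)
    have hαβ : α - β = (γ : F) ^ k := by
      have := congrArg Units.val hk
      rw [Units.val_pow_eq_pow_val] at this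
      exact this.symm
    refine ⟨k % mbar, Nat.mod_lt _ hmbar_pos, horbit α β (k % mbar)
      ⟨(γ : F) ^ (k / mbar), pow_ne_zero _ (Units.ne_zero γ), ?_⟩⟩
    rw [hαβ, ← pow_mul, ← pow_add, mul_comm (k / mbar) mbar, Nat.div_add_mod]
  · rintro ⟨i, hi, rfl⟩
    have hγi : (γ : F) ^ i ≠ 0 := pow_ne_zero _ (Units.ne_zero γ)
    refine ⟨{(γ : F) ^ i, 0}, Set.ncard_pair hγi, ?_⟩
    exact (horbit ((γ : F) ^ i) 0 i ⟨1, one_ne_zero, by rw [one_pow, one_mul, sub_zero]⟩).symm
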